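/- Fix k ≥ 0 and let s_i^t denote the left Weyl group action on the ring R_∞ = Γ[z,t] (s_i^t for i ≥ 1 swaps t_i and t_{i+1}; s_0^t sends t_1 to -t_1 and Q_r(x_1,x_2,...) to Q_r(-t_1,x_1,x_2,...)). Then: (a) s_i^t(ϑ_r^{(l)}) = ϑ_r^{(l)} whenever l ≠ ±i; (b) s_i^t(ϑ_r^{(i)}) = ϑ_r^{(i-1)} − t_{i+1}·ϑ_{r-1}^{(i-1)} for i ≥ 0; (c) s_i^t(ϑ_r^{(-i)}) = ϑ_r^{(-i-1)} + t_i·ϑ_{r-1}^{(-i-1)} for i > 0. -/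

import Mathlib

/-!
Statement 3: Fix `k ≥ 0` and let `s_i^t` denote the left Weyl group action on `R_∞ = Γ[z,t]`
(`s_i^t` for `i ≥ 1` swaps `t_i` and `t_{i+1}`; `s_0^t` sends `t_1 ↦ -t_1` and
`Q_r(x_1,x_2,…) ↦ Q_r(-t_1,x_1,x_2,…)`).  Then:
(a) `s_i^t(ϑ_r^{(l)}) = ϑ_r^{(l)}` whenever `l ≠ ±i`;
(b) `s_i^t(ϑ_r^{(i)}) = ϑ_r^{(i-1)} − t_{i+1}·ϑ_{r-1}^{(i-1)}` for `i ≥ 0`;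
(c) `s_i^t(ϑ_r^{(-i)}) = ϑ_r^{(-i-1)} + t_i·ϑ_{r-1}^{(-i-1)}` for `i > 0`.

We realize the double theta polynomials by their generating functions
`f_l(u) = ∏_{i≥1}(1+x_i u)/(1-x_i u)·∏_{i=1}^k(1+z_i u)·∏_{i=1}^l(1-t_i u)` (with factors
`(1+t_i u)^{-1}` for negative superscript), universally over every commutative ring, every
number `N` of (possibly nonzero) `x`-variables and all values of the variables
(`x i, z i, t i` standing for `x_{i+1}, z_{i+1}, t_{i+1}`).  The action of `s_i^t` on a theta
polynomial is the corresponding substitution of the variable sequences: a swap of two `t`'s for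
`i ≥ 1`, and for `i = 0` the substitution `t_1 ↦ -t_1` together with prepending the variable
`-t_1` to the `x`-sequence. -/

open Finset

noncomputable section

variable {R : Type*} [CommRing R]

/-- The power series `(1 - a u)⁻¹ = ∑_n aⁿ uⁿ`. -/
def geomSeries (a : R) : PowerSeries R := PowerSeries.mk fun n => a ^ n

/-- The generating function `f_l(u)` of the double theta polynomials `_kϑ_r^{(l)}`. -/
def thetaGF (k N : ℕ) (x z t : ℕ → R) (l : ℤ) : PowerSeries R :=
  (∏ i ∈ range N, ((1 + PowerSeries.C (R := R) (x i) * PowerSeries.X) * geomSeries (x i))) *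
    (∏ i ∈ range k, (1 + PowerSeries.C (R := R) (z i) * PowerSeries.X)) *
    (if 0 ≤ l then ∏ i ∈ range l.toNat, (1 - PowerSeries.C (R := R) (t i) * PowerSeries.X)
     else ∏ i ∈ range (-l).toNat, geomSeries (-(t i)))

/-- The double theta polynomial `_kϑ_r^{(l)}(x,z|t)`; it vanishes for `r < 0`. -/
def theta (k N : ℕ) (x z t : ℕ → R) (l r : ℤ) : R :=
  if r < 0 then 0 else PowerSeries.coeff (R := R) r.toNat (thetaGF k N x z t l)

/-- The image `s_i^t(ϑ_r^{(l)})` of a double theta polynomial under the left Weyl group action: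
for `i ≥ 1` the variables `t_i` and `t_{i+1}` (0-indexed: `t (i-1)` and `t i`) are swapped;
for `i = 0`, `t_1` is replaced by `-t_1` and `Q_r(x) ↦ Q_r(-t_1, x)`, i.e. `-t_1` is prepended
to the `x`-variables. -/
def thetaST (i k N : ℕ) (x z t : ℕ → R) (l r : ℤ) : R :=
  if i = 0 then
    theta k (N + 1) (fun j => if j = 0 then -(t 0) else x (j - 1)) z
      (Function.update t 0 (-(t 0))) l r
  else
    theta k N x z (t ∘ Equiv.swap (i - 1) i) l r


/-- `geomSeries a` is inverse to `1 - a·X`. -/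
lemma geom_mul (a : R) : geomSeries a * (1 - PowerSeries.C (R := R) a * PowerSeries.X) = 1 := by
  ext n
  rw [mul_sub, mul_one, ← mul_assoc, mul_comm (geomSeries a) (PowerSeries.C (R := R) a), mul_assoc]
  cases n with
  | zero => simp [geomSeries]
  | succ m =>
    rw [map_sub, PowerSeries.coeff_C_mul, PowerSeries.coeff_succ_mul_X]
    simp [geomSeries, pow_succ, mul_comm]

lemma geom_mul' (a : R) : geomSeries (-a) * (1 + PowerSeries.C (R := R) a * PowerSeries.X) = 1 := by
  have := geom_mul (-a)
  rwa [map_neg, neg_mul, sub_neg_eq_add] at this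

/-- Coefficient extraction with integer index (vanishing for negative index). -/
def coeffZ (F : PowerSeries R) (r : ℤ) : R :=
  if r < 0 then 0 else PowerSeries.coeff (R := R) r.toNat F

lemma coeffZ_mul_sub (F : PowerSeries R) (c : R) (r : ℤ) :
    coeffZ (F * (1 - PowerSeries.C (R := R) c * PowerSeries.X)) r
      = coeffZ F r - c * coeffZ F (r - 1) := by
  unfold coeffZ
  by_cases hr : r < 0
  · simp [hr, show r - 1 < 0 by omega]
  by_cases hr0 : r = 0
  · subst hr0
    simp only [show ¬((0:ℤ) < 0) by norm_num, if_neg, show (0:ℤ) - 1 < 0 by norm_num, if_pos,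
      mul_zero, sub_zero, Int.toNat_zero, if_true]
    simp [PowerSeries.coeff_zero_eq_constantCoeff, map_mul, map_sub, mul_sub]
  · have h1 : r.toNat = (r - 1).toNat + 1 := by omega
    rw [if_neg hr, if_neg hr, if_neg (by omega : ¬ (r - 1 < 0)), h1]
    rw [mul_sub, mul_one, mul_left_comm, map_sub, PowerSeries.coeff_C_mul,
      PowerSeries.coeff_succ_mul_X]

lemma coeffZ_mul_add (F : PowerSeries R) (c : R) (r : ℤ) :
    coeffZ (F * (1 + PowerSeries.C (R := R) c * PowerSeries.X)) r
      = coeffZ F r + c * coeffZ F (r - 1) := by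
  have := coeffZ_mul_sub F (-c) r
  rw [map_neg, neg_mul, sub_neg_eq_add] at this
  rw [this]; ring

lemma prod_swap_range {M : Type*} [CommMonoid M] (g : ℕ → M) {i n : ℕ} (hi : 1 ≤ i)
    (hn : n ≠ i) : ∏ j ∈ range n, g (Equiv.swap (i - 1) i j) = ∏ j ∈ range n, g j := by
  rcases lt_or_gt_of_ne hn with h | h
  · refine Finset.prod_congr rfl fun j hj => ?_
    rw [mem_range] at hj
    rw [Equiv.swap_apply_of_ne_of_ne (by omega) (by omega)]
  · refine Equiv.Perm.prod_comp _ _ _ fun a ha => ?_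
    simp only [Set.mem_setOf_eq] at ha
    have : a = i - 1 ∨ a = i := by
      by_contra hc; push_neg at hc
      exact ha (Equiv.swap_apply_of_ne_of_ne hc.1 hc.2)
    simp only [coe_range, Set.mem_Iio]
    omega

lemma GF_swap_inv (k N : ℕ) (x z t : ℕ → R) {i : ℕ} (hi : 1 ≤ i) {l : ℤ}
    (h1 : l ≠ (i : ℤ)) (h2 : l ≠ -(i : ℤ)) :
    thetaGF k N x z (t ∘ Equiv.swap (i - 1) i) l = thetaGF k N x z t l := by
  unfold thetaGF
  congr 1
  split_ifs with h
  · exact prod_swap_range (fun j => 1 - PowerSeries.C (R := R) (t j) * PowerSeries.X) hi (by omega)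
  · exact prod_swap_range (fun j => geomSeries (-(t j))) hi (by omega)

lemma GF_swap_b (k N : ℕ) (x z t : ℕ → R) {i : ℕ} (hi : 1 ≤ i) :
    thetaGF k N x z (t ∘ Equiv.swap (i - 1) i) (i : ℤ)
      = thetaGF k N x z t ((i : ℤ) - 1) * (1 - PowerSeries.C (R := R) (t i) * PowerSeries.X) := by
  unfold thetaGF
  rw [if_pos (by omega), if_pos (by omega),
    show (i : ℤ).toNat = (i - 1) + 1 by omega, show ((i : ℤ) - 1).toNat = i - 1 by omega,
    prod_range_succ]
  have h0 : ∀ j ∈ range (i - 1),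
      (1 - PowerSeries.C (R := R) ((t ∘ Equiv.swap (i - 1) i) j) * PowerSeries.X)
        = 1 - PowerSeries.C (R := R) (t j) * PowerSeries.X := fun j hj => by
    rw [mem_range] at hj
    simp only [Function.comp_apply, Equiv.swap_apply_of_ne_of_ne (by omega : j ≠ i - 1)
      (by omega : j ≠ i)]
  rw [Finset.prod_congr rfl h0,
    show (t ∘ Equiv.swap (i - 1) i) (i - 1) = t i by
      simp [Function.comp_apply, Equiv.swap_apply_left]]
  ring

lemma GF_swap_c (k N : ℕ) (x z t : ℕ → R) {i : ℕ} (hi : 1 ≤ i) :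
    thetaGF k N x z (t ∘ Equiv.swap (i - 1) i) (-(i : ℤ))
      = thetaGF k N x z t (-(i : ℤ) - 1) * (1 + PowerSeries.C (R := R) (t (i - 1)) * PowerSeries.X) := by
  unfold thetaGF
  rw [if_neg (by omega), if_neg (by omega),
    show (-(-(i : ℤ))).toNat = (i - 1) + 1 by omega,
    show (-(-(i : ℤ) - 1)).toNat = ((i - 1) + 1) + 1 by omega,
    prod_range_succ, prod_range_succ, prod_range_succ]
  have h0 : ∀ j ∈ range (i - 1),
      geomSeries (-((t ∘ Equiv.swap (i - 1) i) j)) = geomSeries (-(t j)) := fun j hj => by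
    rw [mem_range] at hj
    simp only [Function.comp_apply, Equiv.swap_apply_of_ne_of_ne (by omega : j ≠ i - 1)
      (by omega : j ≠ i)]
  rw [Finset.prod_congr rfl h0,
    show (t ∘ Equiv.swap (i - 1) i) (i - 1) = t i by
      simp [Function.comp_apply, Equiv.swap_apply_left],
    show (i - 1) + 1 = i by omega]
  linear_combination (-((∏ j ∈ range N, ((1 + PowerSeries.C (R := R) (x j) * PowerSeries.X) * geomSeries (x j))) *
    (∏ j ∈ range k, (1 + PowerSeries.C (R := R) (z j) * PowerSeries.X)) *
    (∏ j ∈ range (i - 1), geomSeries (-(t j))) * geomSeries (-(t i)))) * geom_mul' (t (i - 1))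

lemma xprod_peel (N : ℕ) (x : ℕ → R) (c : R) :
    (∏ j ∈ range (N + 1),
        ((1 + PowerSeries.C (R := R) ((fun j => if j = 0 then -c else x (j - 1)) j) * PowerSeries.X) *
          geomSeries ((fun j => if j = 0 then -c else x (j - 1)) j)))
      = (∏ j ∈ range N, ((1 + PowerSeries.C (R := R) (x j) * PowerSeries.X) * geomSeries (x j))) *
        ((1 - PowerSeries.C (R := R) c * PowerSeries.X) * geomSeries (-c)) := by
  rw [prod_range_succ']
  simp only [Nat.succ_ne_zero, if_false, Nat.add_sub_cancel, if_true, if_pos rfl, map_neg,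
    neg_mul, ← sub_eq_add_neg]

lemma GF0_b (k N : ℕ) (x z t : ℕ → R) :
    thetaGF k (N + 1) (fun j => if j = 0 then -(t 0) else x (j - 1)) z
        (Function.update t 0 (-(t 0))) 0
      = thetaGF k N x z t (-1) * (1 - PowerSeries.C (R := R) (t 0) * PowerSeries.X) := by
  unfold thetaGF
  rw [if_pos le_rfl, if_neg (by norm_num), xprod_peel,
    show ((0:ℤ)).toNat = 0 from rfl, prod_range_zero,
    show ((-(-1:ℤ))).toNat = 1 by norm_num, prod_range_one]
  ring

lemma GF0_a_pos (k N : ℕ) (x z t : ℕ → R) {l : ℤ} (hl : 1 ≤ l) :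
    thetaGF k (N + 1) (fun j => if j = 0 then -(t 0) else x (j - 1)) z
        (Function.update t 0 (-(t 0))) l
      = thetaGF k N x z t l := by
  unfold thetaGF
  rw [if_pos (by omega), if_pos (by omega), xprod_peel,
    show l.toNat = (l.toNat - 1) + 1 by omega, prod_range_succ', prod_range_succ']
  simp only [Function.update_of_ne (Nat.succ_ne_zero _), Function.update_self, map_neg, neg_mul,
    sub_neg_eq_add]
  linear_combination ((∏ j ∈ range N,
      ((1 + PowerSeries.C (R := R) (x j) * PowerSeries.X) * geomSeries (x j))) *
    (∏ j ∈ range k, (1 + PowerSeries.C (R := R) (z j) * PowerSeries.X)) *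
    (∏ j ∈ range (l.toNat - 1), (1 - PowerSeries.C (R := R) (t (j + 1)) * PowerSeries.X)) *
    (1 - PowerSeries.C (R := R) (t 0) * PowerSeries.X)) * geom_mul' (t 0)

lemma GF0_a_neg (k N : ℕ) (x z t : ℕ → R) {l : ℤ} (hl : l ≤ -1) :
    thetaGF k (N + 1) (fun j => if j = 0 then -(t 0) else x (j - 1)) z
        (Function.update t 0 (-(t 0))) l
      = thetaGF k N x z t l := by
  unfold thetaGF
  rw [if_neg (by omega), if_neg (by omega), xprod_peel,
    show (-l).toNat = ((-l).toNat - 1) + 1 by omega, prod_range_succ', prod_range_succ']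
  simp only [Function.update_of_ne (Nat.succ_ne_zero _), Function.update_self, neg_neg]
  linear_combination ((∏ j ∈ range N,
      ((1 + PowerSeries.C (R := R) (x j) * PowerSeries.X) * geomSeries (x j))) *
    (∏ j ∈ range k, (1 + PowerSeries.C (R := R) (z j) * PowerSeries.X)) *
    (∏ j ∈ range ((-l).toNat - 1), geomSeries (-(t (j + 1)))) *
    geomSeries (-(t 0))) * geom_mul (t 0)

lemma theta_eq_coeffZ (k N : ℕ) (x z t : ℕ → R) (l r : ℤ) :
    theta k N x z t l r = coeffZ (thetaGF k N x z t l) r := rfl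

/-- Lemma 5.4 of Ikeda–Matsumura: the left Weyl group action on double theta polynomials. -/
theorem sT_action_on_theta (k N : ℕ) (x z t : ℕ → R) :
    -- (a) `s_i^t(ϑ_r^{(l)}) = ϑ_r^{(l)}` for `l ≠ ±i`
    (∀ i : ℕ, ∀ l r : ℤ, l ≠ (i : ℤ) → l ≠ -(i : ℤ) →
      thetaST i k N x z t l r = theta k N x z t l r) ∧
    -- (b) `s_i^t(ϑ_r^{(i)}) = ϑ_r^{(i-1)} − t_{i+1}·ϑ_{r-1}^{(i-1)}` for `i ≥ 0`
    (∀ i : ℕ, ∀ r : ℤ,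
      thetaST i k N x z t i r
        = theta k N x z t ((i : ℤ) - 1) r - t i * theta k N x z t ((i : ℤ) - 1) (r - 1)) ∧
    -- (c) `s_i^t(ϑ_r^{(-i)}) = ϑ_r^{(-i-1)} + t_i·ϑ_{r-1}^{(-i-1)}` for `i > 0`
    (∀ i : ℕ, 0 < i → ∀ r : ℤ,
      thetaST i k N x z t (-(i : ℤ)) r
        = theta k N x z t (-(i : ℤ) - 1) r
            + t (i - 1) * theta k N x z t (-(i : ℤ) - 1) (r - 1)) := by
  refine ⟨?_, ?_, ?_⟩
  · intro i l r h1 h2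
    unfold thetaST
    by_cases hi : i = 0
    · subst hi
      rw [if_pos rfl, theta_eq_coeffZ, theta_eq_coeffZ]
      rcases lt_or_gt_of_ne (show l ≠ 0 by exact_mod_cast h1) with h | h
      · rw [GF0_a_neg k N x z t (by omega)]
      · rw [GF0_a_pos k N x z t (by omega)]
    · rw [if_neg hi, theta_eq_coeffZ, theta_eq_coeffZ,
        GF_swap_inv k N x z t (by omega) h1 h2]
  · intro i r
    unfold thetaST
    by_cases hi : i = 0
    · subst hi
      rw [if_pos rfl, theta_eq_coeffZ, theta_eq_coeffZ, theta_eq_coeffZ,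
        show ((0:ℕ):ℤ) = 0 from rfl, show (0:ℤ) - 1 = -1 by norm_num, GF0_b, coeffZ_mul_sub]
    · rw [if_neg hi, theta_eq_coeffZ, theta_eq_coeffZ, theta_eq_coeffZ,
        GF_swap_b k N x z t (by omega), coeffZ_mul_sub]
  · intro i hi r
    unfold thetaST
    rw [if_neg (by omega), theta_eq_coeffZ, theta_eq_coeffZ, theta_eq_coeffZ,
      GF_swap_c k N x z t hi, coeffZ_mul_add]

end
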